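/- Fix n players with friend sets F_i ⊆ {1,…,n}\{i}, numbers Q_i ≥ 1, and real weights w_{ij} for j ∈ F_i satisfying Σ_{j∈F_i} |w_{ij}|/Q_i < 4 for every i, and real intercepts a_i. Define Γ_i(σ) = L(a_i + Σ_{j∈F_i} (w_{ij}/Q_i) σ_j) where L is the logistic function. Then the system σ_i = Γ_i(σ), i = 1,…,n, has a unique solution σ ∈ [0,1]^n. -/

import Mathlib

open NNReal

noncomputable def logistic (t : ℝ) : ℝ := Real.exp t / (1 + Real.exp t)

lemma logistic_hasDerivAt (t : ℝ) :
    HasDerivAt logistic (Real.exp t / (1 + Real.exp t) ^ 2) t := by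
  have h1 : HasDerivAt Real.exp (Real.exp t) t := Real.hasDerivAt_exp t
  have h2 : HasDerivAt (fun t => 1 + Real.exp t) (Real.exp t) t := by
    exact h1.const_add 1
  have hne : (1 + Real.exp t) ≠ 0 := by positivity
  have : HasDerivAt logistic ((Real.exp t * (1 + Real.exp t) - Real.exp t * Real.exp t) / (1 + Real.exp t) ^ 2) t := h1.div h2 hne
  convert this using 1
  ring

lemma logistic_lipschitz : LipschitzWith (1/4) logistic := by
  apply lipschitzWith_of_nnnorm_deriv_le
  · exact fun t => (logistic_hasDerivAt t).differentiableAt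
  · intro t
    have hd : deriv logistic t = Real.exp t / (1 + Real.exp t) ^ 2 :=
      (logistic_hasDerivAt t).deriv
    rw [← NNReal.coe_le_coe]
    push_cast
    rw [hd, Real.norm_eq_abs, abs_of_nonneg (by positivity)]
    rw [div_le_div_iff₀ (by positivity) (by norm_num)]
    nlinarith [sq_nonneg (1 - Real.exp t), Real.exp_pos t]

lemma logistic_mem : ∀ t, logistic t ∈ Set.Icc (0:ℝ) 1 := by
  intro t
  unfold logistic
  constructor
  · positivity
  · rw [div_le_one (by positivity)]
    linarith [Real.exp_pos t]

theorem unique_BNE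
    (n : ℕ) (F : Fin n → Finset (Fin n)) (hF : ∀ i, i ∉ F i)
    (Q : Fin n → ℝ) (hQ : ∀ i, 1 ≤ Q i)
    (w : Fin n → Fin n → ℝ) (a : Fin n → ℝ)
    (hw : ∀ i, (∑ j ∈ F i, |w i j|) / Q i < 4) :
    ∃! σ : Fin n → ℝ, (∀ i, σ i ∈ Set.Icc (0 : ℝ) 1) ∧
      ∀ i, σ i = logistic (a i + ∑ j ∈ F i, (w i j / Q i) * σ j) := by
  set Γ : (Fin n → ℝ) → (Fin n → ℝ) :=
    fun σ i => logistic (a i + ∑ j ∈ F i, (w i j / Q i) * σ j) with hΓ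
  have hQpos : ∀ i, (0:ℝ) < Q i := fun i => lt_of_lt_of_le one_pos (hQ i)
  have hc0 : ∀ i, (0:ℝ) ≤ (∑ j ∈ F i, |w i j|) / Q i / 4 := by
    intro i
    have : (0:ℝ) ≤ ∑ j ∈ F i, |w i j| := Finset.sum_nonneg fun j _ => abs_nonneg _
    exact div_nonneg (div_nonneg this (hQpos i).le) (by norm_num)
  set K : ℝ≥0 := Finset.univ.sup (fun i : Fin n => (⟨_, hc0 i⟩ : ℝ≥0)) with hK
  have hK1 : K < 1 := by
    rw [hK]; refine (Finset.sup_lt_iff (by norm_num : (⊥:ℝ≥0) < 1)).2 ?_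
    intro i _
    refine NNReal.coe_lt_coe.1 ?_
    simp only [NNReal.coe_one]
    have := hw i
    show (∑ j ∈ F i, |w i j|) / Q i / 4 < 1
    linarith
  have hKc : ∀ i, (∑ j ∈ F i, |w i j|) / Q i / 4 ≤ (K:ℝ) := by
    intro i
    have := Finset.le_sup (f := fun i : Fin n => (⟨_, hc0 i⟩ : ℝ≥0)) (Finset.mem_univ i)
    exact_mod_cast this
  have hlip : LipschitzWith K Γ := by
    apply LipschitzWith.of_dist_le_mul
    intro σ τ
    have hd0 : (0:ℝ) ≤ dist σ τ := dist_nonneg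
    rw [dist_pi_le_iff (by positivity)]
    intro i
    have key : dist (Γ σ i) (Γ τ i) ≤
        (1/4) * |(∑ j ∈ F i, (w i j / Q i) * σ j) - (∑ j ∈ F i, (w i j / Q i) * τ j)| := by
      have := logistic_lipschitz.dist_le_mul
        (a i + ∑ j ∈ F i, (w i j / Q i) * σ j) (a i + ∑ j ∈ F i, (w i j / Q i) * τ j)
      simpa [hΓ, Real.dist_eq, add_sub_add_left_eq_sub] using this
    have hsum : |(∑ j ∈ F i, (w i j / Q i) * σ j) - (∑ j ∈ F i, (w i j / Q i) * τ j)| ≤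
        ((∑ j ∈ F i, |w i j|) / Q i) * dist σ τ := by
      rw [← Finset.sum_sub_distrib]
      calc |∑ j ∈ F i, ((w i j / Q i) * σ j - (w i j / Q i) * τ j)|
          ≤ ∑ j ∈ F i, |(w i j / Q i) * σ j - (w i j / Q i) * τ j| :=
            Finset.abs_sum_le_sum_abs _ _
        _ ≤ ∑ j ∈ F i, |w i j| / Q i * dist σ τ := by
            apply Finset.sum_le_sum
            intro j _
            rw [← mul_sub, abs_mul, abs_div, abs_of_pos (hQpos i)]
            have h1 : |σ j - τ j| ≤ dist σ τ := by
              rw [← Real.dist_eq]; exact dist_le_pi_dist σ τ j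
            have h2 : (0:ℝ) ≤ |w i j| / Q i := div_nonneg (abs_nonneg _) (hQpos i).le
            exact mul_le_mul_of_nonneg_left h1 h2
        _ = ((∑ j ∈ F i, |w i j|) / Q i) * dist σ τ := by
            rw [Finset.sum_div, Finset.sum_mul]
    calc dist (Γ σ i) (Γ τ i)
        ≤ (1/4) * (((∑ j ∈ F i, |w i j|) / Q i) * dist σ τ) :=
          key.trans (by nlinarith)
      _ = ((∑ j ∈ F i, |w i j|) / Q i / 4) * dist σ τ := by ring
      _ ≤ (K:ℝ) * dist σ τ := mul_le_mul_of_nonneg_right (hKc i) hd0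
  have hcontr : ContractingWith K Γ := ⟨hK1, hlip⟩
  have : Nonempty (Fin n → ℝ) := ⟨fun _ => 0⟩
  refine ⟨ContractingWith.fixedPoint Γ hcontr, ?_, ?_⟩
  · have hfix : Function.IsFixedPt Γ (ContractingWith.fixedPoint Γ hcontr) :=
      ContractingWith.fixedPoint_isFixedPt hcontr
    constructor
    · intro i
      have h := congrFun hfix i
      rw [← h]
      exact logistic_mem _
    · intro i
      exact (congrFun hfix i).symm
  · rintro τ ⟨_, hτ⟩
    have hfp : Function.IsFixedPt Γ τ := by
      funext i
      exact (hτ i).symm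
    exact ContractingWith.fixedPoint_unique hcontr hfp
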